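/- Let $0 < \delta \le 1/8$, $1 \le k < m/2$, let $A$ be an $m \times m$ symmetric positive semidefinite matrix, and let $\hat\Gamma$ be an $m \times m$ symmetric matrix with $\Delta = \hat\Gamma - A$. Suppose $|u^T \Delta v| \le \delta \le \frac{3}{32}\lambda_{\min}(A)$ for all unit vectors $u, v$ each supported on at most $k$ coordinates. Then for all $v \in \mathbb{R}^m$: (i) $v^T \hat\Gamma v \ge \frac{5}{8}\lambda_{\min}(A)\|v\|_2^2 - \frac{3\lambda_{\min}(A)}{8k}\|v\|_1^2$, and (ii) $v^T \hat\Gamma v \le \frac{11}{8}\lambda_{\max}(A)\|v\|_2^2 + \frac{3\lambda_{\min}(A)}{8k}\|v\|_1^2$. -/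
import Mathlib


open Finset Matrix

lemma exists_top_subset {α : Type*} [DecidableEq α] (f : α → ℝ) :
    ∀ (k : ℕ) (t : Finset α), k ≤ t.card →
    ∃ S, S ⊆ t ∧ S.card = k ∧ ∀ i ∈ S, ∀ j ∈ t \ S, f j ≤ f i := by
  intro k
  induction k with
  | zero => intro t _; exact ⟨∅, empty_subset t, rfl, by simp⟩
  | succ k ih =>
    intro t hkt
    obtain ⟨S, hSt, hScard, hStop⟩ := ih t (le_trans (Nat.le_succ k) hkt)
    have hne : (t \ S).Nonempty := by
      rw [← Finset.card_pos, Finset.card_sdiff_of_subset hSt]; omega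
    obtain ⟨j₀, hj₀, hmax⟩ := Finset.exists_max_image (t \ S) f hne
    have hj₀S : j₀ ∉ S := (Finset.mem_sdiff.mp hj₀).2
    refine ⟨insert j₀ S, ?_, ?_, ?_⟩
    · exact Finset.insert_subset (Finset.mem_sdiff.mp hj₀).1 hSt
    · rw [Finset.card_insert_of_notMem hj₀S, hScard]
    · intro i hi j hj
      have hjt : j ∈ t \ S := by
        rw [Finset.mem_sdiff] at hj ⊢
        exact ⟨hj.1, fun h => hj.2 (Finset.mem_insert_of_mem h)⟩
      rcases Finset.mem_insert.mp hi with rfl | hiS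
      · exact hmax j hjt
      · exact hStop i hiS j hjt

lemma decomp_aux {m : ℕ} (k : ℕ) (hk : 1 ≤ k) :
    ∀ (n : ℕ) (v : Fin m → ℝ) (t : Finset (Fin m)), t.card = n →
    (∀ i ∉ t, v i = 0) →
    ∀ B : ℝ, 0 ≤ B → (∀ i, |v i| ≤ B) →
    ∃ (N : ℕ) (w : Fin N → Fin m → ℝ),
      (∀ j, v j = ∑ i, w i j) ∧
      (∀ i, ∃ T : Finset (Fin m), T.card ≤ k ∧ ∀ j ∉ T, w i j = 0) ∧
      ∑ i, Real.sqrt (∑ j, w i j ^ 2) ≤ Real.sqrt k * B + (∑ j, |v j|) / Real.sqrt k := by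
  intro n
  induction n using Nat.strong_induction_on with
  | _ n ih =>
    intro v t htn hsupp B hB hvB
    have hks : (0:ℝ) < Real.sqrt k := Real.sqrt_pos.mpr (by exact_mod_cast hk)
    have hl1 : (0:ℝ) ≤ ∑ j, |v j| := Finset.sum_nonneg fun j _ => abs_nonneg _
    by_cases hcard : t.card ≤ k
    · -- single block
      refine ⟨1, fun _ => v, ?_, ?_, ?_⟩
      · intro j; simp
      · intro i; exact ⟨t, hcard, hsupp⟩
      · simp only [Fin.sum_univ_one]
        have h1 : ∑ j, v j ^ 2 ≤ k * B ^ 2 := by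
          have : ∑ j, v j ^ 2 = ∑ j ∈ t, v j ^ 2 := by
            refine (Finset.sum_subset (Finset.subset_univ t) ?_).symm
            intro x _ hx; rw [hsupp x hx]; ring
          rw [this]
          calc ∑ j ∈ t, v j ^ 2 ≤ ∑ j ∈ t, B ^ 2 := by
                refine Finset.sum_le_sum fun j _ => ?_
                rw [← sq_abs]; exact pow_le_pow_left₀ (abs_nonneg _) (hvB j) 2
            _ = t.card * B ^ 2 := by rw [Finset.sum_const, nsmul_eq_mul]
            _ ≤ k * B ^ 2 := by
                apply mul_le_mul_of_nonneg_right _ (sq_nonneg B)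
                exact_mod_cast hcard
        calc Real.sqrt (∑ j, v j ^ 2) ≤ Real.sqrt (k * B ^ 2) := Real.sqrt_le_sqrt h1
          _ = Real.sqrt k * B := by
              rw [Real.sqrt_mul (by positivity), Real.sqrt_sq hB]
          _ ≤ Real.sqrt k * B + (∑ j, |v j|) / Real.sqrt k :=
              le_add_of_nonneg_right (by positivity)
    · -- split off top-k block
      push_neg at hcard
      obtain ⟨S, hSt, hScard, hStop⟩ := exists_top_subset (fun i => |v i|) k t hcard.le
      set vS : Fin m → ℝ := fun i => if i ∈ S then v i else 0 with hvS
      set v' : Fin m → ℝ := fun i => if i ∈ S then 0 else v i with hv'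
      have hsum : ∀ j, v j = vS j + v' j := by
        intro j; simp only [hvS, hv']; by_cases h : j ∈ S <;> simp [h]
      have habs : ∀ j, |v j| = |vS j| + |v' j| := by
        intro j; simp only [hvS, hv']; by_cases h : j ∈ S <;> simp [h]
      have hl1split : ∑ j, |v j| = (∑ j, |vS j|) + ∑ j, |v' j| := by
        rw [← Finset.sum_add_distrib]; exact Finset.sum_congr rfl fun j _ => habs j
      -- ℓ1 of vS equals sum over S
      have hvSl1 : ∑ j, |vS j| = ∑ j ∈ S, |v j| := by
        rw [← Finset.sum_subset (Finset.subset_univ S)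
          (by intro x _ hx; simp [hvS, hx])]
        exact Finset.sum_congr rfl fun j hj => by simp [hvS, hj]
      -- sup bound for v'
      have hB' : ∀ j, |v' j| ≤ (∑ j, |vS j|) / k := by
        intro j
        have hk0 : (0:ℝ) < k := by exact_mod_cast hk
        by_cases hjS : j ∈ S
        · simp only [hv', hjS, if_pos, abs_zero]; positivity
        by_cases hjt : j ∈ t
        · have hjts : j ∈ t \ S := Finset.mem_sdiff.mpr ⟨hjt, hjS⟩
          have : ∀ i ∈ S, |v j| ≤ |v i| := fun i hi => hStop i hi j hjts
          have hsumS : (k:ℝ) * |v j| ≤ ∑ i ∈ S, |v i| := by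
            calc (k:ℝ) * |v j| = ∑ _i ∈ S, |v j| := by
                  rw [Finset.sum_const, nsmul_eq_mul, hScard]
              _ ≤ ∑ i ∈ S, |v i| := Finset.sum_le_sum this
          rw [hvSl1, le_div_iff₀ hk0]
          simpa [hv', hjS, mul_comm] using hsumS
        · have h0 : v' j = 0 := by simp [hv', hjS, hsupp j hjt]
          rw [h0, abs_zero]; positivity
      have hB'0 : (0:ℝ) ≤ (∑ j, |vS j|) / k := by positivity
      -- v' supported on t \ S with smaller card
      have hsupp' : ∀ i ∉ t \ S, v' i = 0 := by
        intro i hi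
        rw [Finset.mem_sdiff] at hi; push_neg at hi
        by_cases hiS : i ∈ S
        · simp [hv', hiS]
        · by_cases hit : i ∈ t
          · exact absurd (hi hit) hiS
          · simp [hv', hiS, hsupp i hit]
      have hcard' : (t \ S).card < n := by
        rw [Finset.card_sdiff_of_subset hSt, hScard]; omega
      obtain ⟨N, w, hw1, hw2, hw3⟩ := ih (t \ S).card hcard' v' (t \ S) rfl hsupp'
        ((∑ j, |vS j|) / k) hB'0 hB'
      refine ⟨N + 1, Fin.cons vS w, ?_, ?_, ?_⟩
      · intro j
        rw [hsum j, hw1 j, Fin.sum_univ_succ]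
        simp
      · intro i
        refine Fin.cases ?_ ?_ i
        · exact ⟨S, hScard.le, fun j hj => by simp [hvS, hj]⟩
        · intro i'; exact hw2 i'
      · rw [Fin.sum_univ_succ]
        simp only [Fin.cons_zero, Fin.cons_succ]
        have hvS2 : Real.sqrt (∑ j, vS j ^ 2) ≤ Real.sqrt k * B := by
          have h1 : ∑ j, vS j ^ 2 ≤ k * B ^ 2 := by
            have : ∑ j, vS j ^ 2 = ∑ j ∈ S, v j ^ 2 := by
              rw [← Finset.sum_subset (Finset.subset_univ S)
                (by intro x _ hx; simp [hvS, hx])]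
              exact Finset.sum_congr rfl fun j hj => by simp [hvS, hj]
            rw [this]
            calc ∑ j ∈ S, v j ^ 2 ≤ ∑ j ∈ S, B ^ 2 := by
                  refine Finset.sum_le_sum fun j _ => ?_
                  rw [← sq_abs]; exact pow_le_pow_left₀ (abs_nonneg _) (hvB j) 2
              _ = k * B ^ 2 := by rw [Finset.sum_const, nsmul_eq_mul, hScard]
          calc Real.sqrt (∑ j, vS j ^ 2) ≤ Real.sqrt (k * B ^ 2) := Real.sqrt_le_sqrt h1
            _ = Real.sqrt k * B := by
                rw [Real.sqrt_mul (by positivity), Real.sqrt_sq hB]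
        have hkey : Real.sqrt k * ((∑ j, |vS j|) / k) = (∑ j, |vS j|) / Real.sqrt k := by
          rw [eq_div_iff hks.ne']
          have hss : Real.sqrt k * Real.sqrt k = (k:ℝ) := Real.mul_self_sqrt (by positivity)
          field_simp
          linear_combination (∑ j, |vS j|) * hss
        have hadd : (∑ j, |vS j|) / Real.sqrt k + (∑ j, |v' j|) / Real.sqrt k
            = (∑ j, |v j|) / Real.sqrt k := by rw [hl1split, add_div]
        linarith [hvS2, hw3, hkey, hadd]

lemma decomp_full {m : ℕ} (k : ℕ) (hk : 1 ≤ k) (v : Fin m → ℝ) :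
    ∃ (N : ℕ) (w : Fin N → Fin m → ℝ),
      (∀ j, v j = ∑ i, w i j) ∧
      (∀ i, ∃ T : Finset (Fin m), T.card ≤ k ∧ ∀ j ∉ T, w i j = 0) ∧
      ∑ i, Real.sqrt (∑ j, w i j ^ 2) ≤
        Real.sqrt (∑ j, v j ^ 2) + (∑ j, |v j|) / Real.sqrt k := by
  classical
  have hks : (0:ℝ) < Real.sqrt k := Real.sqrt_pos.mpr (by exact_mod_cast hk)
  set t : Finset (Fin m) := Finset.univ.filter (fun i => v i ≠ 0) with ht
  have hsupp : ∀ i ∉ t, v i = 0 := by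
    intro i hi; by_contra h; exact hi (Finset.mem_filter.mpr ⟨Finset.mem_univ i, h⟩)
  by_cases hcard : t.card ≤ k
  · refine ⟨1, fun _ => v, fun j => by simp, fun i => ⟨t, hcard, hsupp⟩, ?_⟩
    simp only [Fin.sum_univ_one]
    exact le_add_of_nonneg_right (by positivity)
  · push_neg at hcard
    obtain ⟨S, hSt, hScard, hStop⟩ := exists_top_subset (fun i => |v i|) k t hcard.le
    set vS : Fin m → ℝ := fun i => if i ∈ S then v i else 0 with hvS
    set v' : Fin m → ℝ := fun i => if i ∈ S then 0 else v i with hv'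
    have hsum : ∀ j, v j = vS j + v' j := by
      intro j; simp only [hvS, hv']; by_cases h : j ∈ S <;> simp [h]
    have habs : ∀ j, |v j| = |vS j| + |v' j| := by
      intro j; simp only [hvS, hv']; by_cases h : j ∈ S <;> simp [h]
    have hl1split : ∑ j, |v j| = (∑ j, |vS j|) + ∑ j, |v' j| := by
      rw [← Finset.sum_add_distrib]; exact Finset.sum_congr rfl fun j _ => habs j
    have hvSl1 : ∑ j, |vS j| = ∑ j ∈ S, |v j| := by
      rw [← Finset.sum_subset (Finset.subset_univ S)
        (by intro x _ hx; simp [hvS, hx])]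
      exact Finset.sum_congr rfl fun j hj => by simp [hvS, hj]
    have hB' : ∀ j, |v' j| ≤ (∑ j, |vS j|) / k := by
      intro j
      have hk0 : (0:ℝ) < k := by exact_mod_cast hk
      by_cases hjS : j ∈ S
      · simp only [hv', hjS, if_pos, abs_zero]; positivity
      by_cases hjt : j ∈ t
      · have hjts : j ∈ t \ S := Finset.mem_sdiff.mpr ⟨hjt, hjS⟩
        have hle : ∀ i ∈ S, |v j| ≤ |v i| := fun i hi => hStop i hi j hjts
        have hsumS : (k:ℝ) * |v j| ≤ ∑ i ∈ S, |v i| := by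
          calc (k:ℝ) * |v j| = ∑ _i ∈ S, |v j| := by
                rw [Finset.sum_const, nsmul_eq_mul, hScard]
            _ ≤ ∑ i ∈ S, |v i| := Finset.sum_le_sum hle
        rw [hvSl1, le_div_iff₀ hk0]
        simpa [hv', hjS, mul_comm] using hsumS
      · have h0 : v' j = 0 := by simp [hv', hjS, hsupp j hjt]
        rw [h0, abs_zero]; positivity
    have hB'0 : (0:ℝ) ≤ (∑ j, |vS j|) / k := by positivity
    have hsupp' : ∀ i ∉ t \ S, v' i = 0 := by
      intro i hi
      rw [Finset.mem_sdiff] at hi; push_neg at hi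
      by_cases hiS : i ∈ S
      · simp [hv', hiS]
      · by_cases hit : i ∈ t
        · exact absurd (hi hit) hiS
        · simp [hv', hiS, hsupp i hit]
    obtain ⟨N, w, hw1, hw2, hw3⟩ := decomp_aux k hk (t \ S).card v' (t \ S) rfl hsupp'
      ((∑ j, |vS j|) / k) hB'0 hB'
    refine ⟨N + 1, Fin.cons vS w, ?_, ?_, ?_⟩
    · intro j
      rw [hsum j, hw1 j, Fin.sum_univ_succ]
      simp
    · intro i
      refine Fin.cases ?_ ?_ i
      · exact ⟨S, hScard.le, fun j hj => by simp [hvS, hj]⟩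
      · intro i'; exact hw2 i'
    · rw [Fin.sum_univ_succ]
      simp only [Fin.cons_zero, Fin.cons_succ]
      have hvS2 : Real.sqrt (∑ j, vS j ^ 2) ≤ Real.sqrt (∑ j, v j ^ 2) := by
        apply Real.sqrt_le_sqrt
        apply Finset.sum_le_sum
        intro j _
        simp only [hvS]
        by_cases h : j ∈ S <;> simp [h, sq_nonneg]
      have hkey : Real.sqrt k * ((∑ j, |vS j|) / k) = (∑ j, |vS j|) / Real.sqrt k := by
        rw [eq_div_iff hks.ne']
        have hss : Real.sqrt k * Real.sqrt k = (k:ℝ) := Real.mul_self_sqrt (by positivity)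
        field_simp
        linear_combination (∑ j, |vS j|) * hss
      have hadd : (∑ j, |vS j|) / Real.sqrt k + (∑ j, |v' j|) / Real.sqrt k
          = (∑ j, |v j|) / Real.sqrt k := by rw [hl1split, add_div]
      linarith [hvS2, hw3, hkey, hadd]

lemma sparse_bilinear {m k : ℕ} (M : Matrix (Fin m) (Fin m) ℝ) (δ : ℝ) (hδ : 0 ≤ δ)
    (hM : ∀ u v : Fin m → ℝ,
      (∑ i, u i ^ 2) = 1 → (∑ i, v i ^ 2) = 1 →
      (∃ T : Finset (Fin m), T.card ≤ k ∧ ∀ i ∉ T, u i = 0) →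
      (∃ T : Finset (Fin m), T.card ≤ k ∧ ∀ i ∉ T, v i = 0) →
      |u ⬝ᵥ M.mulVec v| ≤ δ)
    (u v : Fin m → ℝ)
    (hu : ∃ T : Finset (Fin m), T.card ≤ k ∧ ∀ i ∉ T, u i = 0)
    (hv : ∃ T : Finset (Fin m), T.card ≤ k ∧ ∀ i ∉ T, v i = 0) :
    |u ⬝ᵥ M.mulVec v| ≤ δ * Real.sqrt (∑ i, u i ^ 2) * Real.sqrt (∑ i, v i ^ 2) := by
  by_cases hu0 : ∑ i, u i ^ 2 = 0
  · have : ∀ i, u i = 0 := by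
      intro i
      have := (Finset.sum_eq_zero_iff_of_nonneg (fun i _ => sq_nonneg (u i))).mp hu0 i
        (Finset.mem_univ i)
      exact pow_eq_zero_iff (by norm_num) |>.mp this
    have hz : u ⬝ᵥ M.mulVec v = 0 := by
      simp [dotProduct, this]
    rw [hz, abs_zero]; positivity
  by_cases hv0 : ∑ i, v i ^ 2 = 0
  · have : ∀ i, v i = 0 := by
      intro i
      have := (Finset.sum_eq_zero_iff_of_nonneg (fun i _ => sq_nonneg (v i))).mp hv0 i
        (Finset.mem_univ i)
      exact pow_eq_zero_iff (by norm_num) |>.mp this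
    have hz : u ⬝ᵥ M.mulVec v = 0 := by
      have : v = 0 := funext this
      simp [this]
    rw [hz, abs_zero]; positivity
  · set a := Real.sqrt (∑ i, u i ^ 2) with ha
    set b := Real.sqrt (∑ i, v i ^ 2) with hb
    have hsu : (0:ℝ) ≤ ∑ i, u i ^ 2 := Finset.sum_nonneg fun i _ => sq_nonneg _
    have hsv : (0:ℝ) ≤ ∑ i, v i ^ 2 := Finset.sum_nonneg fun i _ => sq_nonneg _
    have ha0 : 0 < a := Real.sqrt_pos.mpr (lt_of_le_of_ne hsu (Ne.symm hu0))
    have hb0 : 0 < b := Real.sqrt_pos.mpr (lt_of_le_of_ne hsv (Ne.symm hv0))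
    have ha2 : a ^ 2 = ∑ i, u i ^ 2 := Real.sq_sqrt hsu
    have hb2 : b ^ 2 = ∑ i, v i ^ 2 := Real.sq_sqrt hsv
    have h1 : (∑ i, (a⁻¹ * u i) ^ 2) = 1 := by
      simp only [mul_pow, ← Finset.mul_sum]
      rw [← ha2]; field_simp
    have h2 : (∑ i, (b⁻¹ * v i) ^ 2) = 1 := by
      simp only [mul_pow, ← Finset.mul_sum]
      rw [← hb2]; field_simp
    obtain ⟨Tu, hTu, hTu0⟩ := hu
    obtain ⟨Tv, hTv, hTv0⟩ := hv
    have hbil := hM (fun i => a⁻¹ * u i) (fun i => b⁻¹ * v i) h1 h2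
      ⟨Tu, hTu, fun i hi => by simp [hTu0 i hi]⟩
      ⟨Tv, hTv, fun i hi => by simp [hTv0 i hi]⟩
    have heq : (fun i => a⁻¹ * u i) ⬝ᵥ M.mulVec (fun i => b⁻¹ * v i)
        = a⁻¹ * b⁻¹ * (u ⬝ᵥ M.mulVec v) := by
      simp only [dotProduct, Matrix.mulVec, Finset.mul_sum]
      apply Finset.sum_congr rfl
      intro i _
      apply Finset.sum_congr rfl
      intro j _
      ring
    rw [heq, abs_mul, abs_mul, abs_inv, abs_inv, abs_of_pos ha0, abs_of_pos hb0] at hbil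
    calc |u ⬝ᵥ M.mulVec v| = a * b * (a⁻¹ * b⁻¹ * |u ⬝ᵥ M.mulVec v|) := by
          field_simp
      _ ≤ a * b * δ := by
          apply mul_le_mul_of_nonneg_left _ (by positivity)
          rw [mul_assoc] at hbil ⊢
          exact hbil
      _ = δ * a * b := by ring

lemma sum_dot {m N : ℕ} (w : Fin N → Fin m → ℝ) (x : Fin m → ℝ) :
    (∑ i, w i) ⬝ᵥ x = ∑ i, w i ⬝ᵥ x := by
  simp only [dotProduct, Finset.sum_apply, Finset.sum_mul]
  exact Finset.sum_comm

lemma dot_sum {m N : ℕ} (w : Fin N → Fin m → ℝ) (x : Fin m → ℝ) :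
    x ⬝ᵥ (∑ i, w i) = ∑ i, x ⬝ᵥ w i := by
  simp only [dotProduct, Finset.sum_apply, Finset.mul_sum]
  exact Finset.sum_comm

set_option maxHeartbeats 1000000 in
/-- Lower and Upper RE conditions for Ghat = A + Δ, where A is symmetric PSD
with eigenvalue bounds λmin, λmax, and Δ has small sparse quadratic forms. -/
theorem lower_upper_RE_from_sparse_perturbation {m : ℕ} (k : ℕ) (hk : 1 ≤ k)
    (hkm : (k : ℝ) < m / 2)
    (A Ghat : Matrix (Fin m) (Fin m) ℝ) (hA : A.PosSemidef) (hΓ : Ghat.IsSymm)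
    (lmin lmax : ℝ) (hlmin0 : 0 ≤ lmin) (hll : lmin ≤ lmax)
    (hmin : ∀ v : Fin m → ℝ, lmin * (∑ i, v i ^ 2) ≤ v ⬝ᵥ A.mulVec v)
    (hmax : ∀ v : Fin m → ℝ, v ⬝ᵥ A.mulVec v ≤ lmax * (∑ i, v i ^ 2))
    (δ : ℝ) (hδ0 : 0 < δ) (hδ1 : δ ≤ 1 / 8) (hδmin : δ ≤ 3 / 32 * lmin)
    (hΔ : ∀ u v : Fin m → ℝ,
      (∑ i, u i ^ 2) = 1 → (∑ i, v i ^ 2) = 1 →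
      (∃ T : Finset (Fin m), T.card ≤ k ∧ ∀ i ∉ T, u i = 0) →
      (∃ T : Finset (Fin m), T.card ≤ k ∧ ∀ i ∉ T, v i = 0) →
      |u ⬝ᵥ (Ghat - A).mulVec v| ≤ δ) :
    ∀ v : Fin m → ℝ,
      (v ⬝ᵥ Ghat.mulVec v ≥
        5 / 8 * lmin * (∑ i, v i ^ 2) - 3 * lmin / (8 * k) * (∑ i, |v i|) ^ 2) ∧
      (v ⬝ᵥ Ghat.mulVec v ≤
        11 / 8 * lmax * (∑ i, v i ^ 2) + 3 * lmin / (8 * k) * (∑ i, |v i|) ^ 2) := by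
  intro v
  have hk0 : (0:ℝ) < k := by exact_mod_cast hk
  have hks : (0:ℝ) < Real.sqrt k := Real.sqrt_pos.mpr hk0
  have hss : Real.sqrt k * Real.sqrt k = (k:ℝ) := Real.mul_self_sqrt hk0.le
  set s2 : ℝ := ∑ i, v i ^ 2 with hs2
  set s1 : ℝ := ∑ i, |v i| with hs1
  have hs2nn : 0 ≤ s2 := Finset.sum_nonneg fun i _ => sq_nonneg _
  have hs1nn : 0 ≤ s1 := Finset.sum_nonneg fun i _ => abs_nonneg _
  obtain ⟨N, w, hw1, hw2, hw3⟩ := decomp_full k hk v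
  set a : Fin N → ℝ := fun i => Real.sqrt (∑ j, w i j ^ 2) with ha
  have hann : ∀ i, 0 ≤ a i := fun i => Real.sqrt_nonneg _
  -- expand the quadratic form of Δ
  have hveq : v = ∑ i, w i := by
    funext j; rw [hw1 j]; simp
  have hexp : v ⬝ᵥ (Ghat - A).mulVec v = ∑ i, ∑ j, w i ⬝ᵥ (Ghat - A).mulVec (w j) := by
    conv_lhs => rw [hveq]
    rw [sum_dot]
    refine Finset.sum_congr rfl fun i _ => ?_
    rw [Matrix.dotProduct_mulVec, dot_sum]
    refine Finset.sum_congr rfl fun j _ => ?_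
    rw [← Matrix.dotProduct_mulVec]
  have hQabs : |v ⬝ᵥ (Ghat - A).mulVec v| ≤ δ * (∑ i, a i) ^ 2 := by
    rw [hexp]
    calc |∑ i, ∑ j, w i ⬝ᵥ (Ghat - A).mulVec (w j)|
        ≤ ∑ i, |∑ j, w i ⬝ᵥ (Ghat - A).mulVec (w j)| :=
          Finset.abs_sum_le_sum_abs _ _
      _ ≤ ∑ i, ∑ j, |w i ⬝ᵥ (Ghat - A).mulVec (w j)| :=
          Finset.sum_le_sum fun i _ => Finset.abs_sum_le_sum_abs _ _
      _ ≤ ∑ i, ∑ j, δ * a i * a j := by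
          refine Finset.sum_le_sum fun i _ => Finset.sum_le_sum fun j _ => ?_
          exact sparse_bilinear (Ghat - A) δ hδ0.le hΔ (w i) (w j) (hw2 i) (hw2 j)
      _ = δ * (∑ i, a i) ^ 2 := by
          rw [sq, Finset.sum_mul_sum, Finset.mul_sum]
          exact Finset.sum_congr rfl fun i _ => by
            rw [Finset.mul_sum]
            exact Finset.sum_congr rfl fun j _ => by ring
  -- bound (∑ a)^2
  have hsum_a : (∑ i, a i) ^ 2 ≤ 2 * s2 + 2 * (s1 ^ 2 / k) := by
    have h1 : (∑ i, a i) ^ 2 ≤ (Real.sqrt s2 + s1 / Real.sqrt k) ^ 2 := by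
      apply pow_le_pow_left₀ (Finset.sum_nonneg fun i _ => hann i)
      exact hw3
    have h2 : (Real.sqrt s2 + s1 / Real.sqrt k) ^ 2 ≤ 2 * s2 + 2 * (s1 ^ 2 / k) := by
      have e1 : Real.sqrt s2 ^ 2 = s2 := Real.sq_sqrt hs2nn
      have e2 : (s1 / Real.sqrt k) ^ 2 = s1 ^ 2 / k := by
        rw [div_pow, Real.sq_sqrt hk0.le]
      nlinarith [sq_nonneg (Real.sqrt s2 - s1 / Real.sqrt k)]
    linarith
  have hQ : |v ⬝ᵥ (Ghat - A).mulVec v| ≤ 2 * δ * s2 + 2 * δ * (s1 ^ 2 / k) := by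
    calc |v ⬝ᵥ (Ghat - A).mulVec v| ≤ δ * (∑ i, a i) ^ 2 := hQabs
      _ ≤ δ * (2 * s2 + 2 * (s1 ^ 2 / k)) := by
          apply mul_le_mul_of_nonneg_left hsum_a hδ0.le
      _ = 2 * δ * s2 + 2 * δ * (s1 ^ 2 / k) := by ring
  have hsplit : v ⬝ᵥ Ghat.mulVec v = v ⬝ᵥ A.mulVec v + v ⬝ᵥ (Ghat - A).mulVec v := by
    rw [Matrix.sub_mulVec, dotProduct_sub]; ring
  have hc : 3 * lmin / (8 * (k:ℝ)) * s1 ^ 2 = 3 / 8 * lmin * (s1 ^ 2 / k) := by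
    field_simp
  have hcnn : 0 ≤ s1 ^ 2 / (k:ℝ) := by positivity
  have hQlo : v ⬝ᵥ (Ghat - A).mulVec v ≥ -(2 * δ * s2 + 2 * δ * (s1 ^ 2 / k)) :=
    neg_le_of_abs_le hQ
  have hQhi : v ⬝ᵥ (Ghat - A).mulVec v ≤ 2 * δ * s2 + 2 * δ * (s1 ^ 2 / k) :=
    le_of_abs_le hQ
  have hPlo := hmin v
  have hPhi := hmax v
  rw [← hs2] at hPlo hPhi
  set Q := v ⬝ᵥ (Ghat - A).mulVec v with hQdef
  set P := v ⬝ᵥ A.mulVec v with hPdef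
  set c := s1 ^ 2 / (k:ℝ) with hcdef
  constructor
  · rw [hsplit, ge_iff_le, hc]
    nlinarith [mul_le_mul_of_nonneg_right hδmin hs2nn,
      mul_le_mul_of_nonneg_right hδmin hcnn]
  · rw [hsplit, hc]
    nlinarith [mul_le_mul_of_nonneg_right hδmin hs2nn,
      mul_le_mul_of_nonneg_right hδmin hcnn,
      mul_le_mul_of_nonneg_right hll hs2nn]
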